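/- Let k ≥ 0, let x^k = (x₁^k, x₂^k) be the k-th alternating minimization iterate, and let x̄^k = (x̄₁^k, x̄₂^k) be its projection onto the optimal set X. Then for every γ ∈ (0,1]: H^k − H* ≤ (L₁/β₁) γ ‖x^k − x̄^k‖² + (1/γ)[ H(x₁^k, x₂^k) − H(x₁^k + γ(x̄₁^k − x₁^k), x₂^k) ]. -/

import Mathlib

open Set Filter Topology

/-- The composite objective function `H(x₁,x₂) = f(x₁,x₂) + g₁(x₁) + g₂(x₂)`. -/
noncomputable def objFun {B₁ B₂ : Type*} (f : B₁ × B₂ → ℝ) (g₁ : B₁ → ℝ) (g₂ : B₂ → ℝ)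
    (x : B₁ × B₂) : ℝ :=
  f x + g₁ x.1 + g₂ x.2


lemma dirDeriv_ge {E : Type*} [NormedAddCommGroup E] [NormedSpace ℝ E]
    {f : E → ℝ} {s : Set E} {x v : E} {D : E →L[ℝ] ℝ}
    (hf : HasFDerivWithinAt f D s x)
    (hmem : ∀ t : ℝ, t ∈ Icc (0:ℝ) 1 → x + t • v ∈ s) {c : ℝ}
    (hc : ∀ t : ℝ, t ∈ Icc (0:ℝ) 1 → f x + t * c ≤ f (x + t • v)) : c ≤ D v := by
  set ψ : ℝ → ℝ := fun t => f (x + t • v) with hψdef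
  have hpath : HasDerivWithinAt (fun t : ℝ => x + t • v) v (Icc (0:ℝ) 1) 0 := by
    simpa using (((hasDerivAt_id (0:ℝ)).smul_const v).const_add x).hasDerivWithinAt
  have hψ : HasDerivWithinAt ψ (D v) (Icc (0:ℝ) 1) 0 := by
    have hf' : HasFDerivWithinAt f D s ((fun t : ℝ => x + t • v) 0) := by simpa using hf
    have := hf'.comp_hasDerivWithinAt (x := (0:ℝ)) hpath (fun t ht => hmem t ht)
    exact this
  rw [hasDerivWithinAt_iff_tendsto_slope] at hψ
  have hne : (𝓝[Icc (0:ℝ) 1 \ {0}] (0:ℝ)).NeBot := by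
    rw [Icc_diff_left]
    exact left_nhdsWithin_Ioc_neBot one_pos
  refine ge_of_tendsto hψ ?_
  filter_upwards [self_mem_nhdsWithin] with t ht
  rw [Icc_diff_left] at ht
  have ht0 : 0 < t := ht.1
  have key := hc t ⟨le_of_lt ht0, ht.2⟩
  have hψ0 : ψ 0 = f x := by simp [hψdef]
  rw [slope_def_field]
  have : ψ 0 + t * c ≤ ψ t := by simpa [hψ0] using key
  rw [sub_zero, le_div_iff₀ ht0]
  linarith

lemma dirDeriv_le {E : Type*} [NormedAddCommGroup E] [NormedSpace ℝ E]
    {f : E → ℝ} {s : Set E} {x v : E} {D : E →L[ℝ] ℝ}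
    (hf : HasFDerivWithinAt f D s x)
    (hmem : ∀ t : ℝ, t ∈ Icc (0:ℝ) 1 → x + t • v ∈ s) {c : ℝ}
    (hc : ∀ t : ℝ, t ∈ Icc (0:ℝ) 1 → f (x + t • v) ≤ f x + t * c) : D v ≤ c := by
  have := dirDeriv_ge (f := fun y => -f y) (D := -D) hf.neg hmem (c := -c)
    (fun t ht => by have h := hc t ht; linarith)
  have h2 : -c ≤ -(D v) := by simpa using this
  linarith

lemma grad_ineq {E : Type*} [NormedAddCommGroup E] [NormedSpace ℝ E]
    {f : E → ℝ} {s : Set E} (hfc : ConvexOn ℝ s f) {x z : E}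
    (hx : x ∈ s) (hz : z ∈ s) {D : E →L[ℝ] ℝ}
    (hf : HasFDerivWithinAt f D s x) : f x + D (z - x) ≤ f z := by
  have hcomb : ∀ t : ℝ, t ∈ Icc (0:ℝ) 1 → x + t • (z - x) = (1 - t) • x + t • z := by
    intro t _
    rw [smul_sub, sub_smul, one_smul]; abel
  have hmem : ∀ t : ℝ, t ∈ Icc (0:ℝ) 1 → x + t • (z - x) ∈ s := by
    intro t ht
    rw [hcomb t ht]
    exact hfc.1 hx hz (by linarith [ht.2]) ht.1 (by ring)
  have h := dirDeriv_le hf hmem (c := f z - f x) (fun t ht => by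
    rw [hcomb t ht]
    calc f ((1 - t) • x + t • z) ≤ (1 - t) * f x + t * f z :=
          hfc.2 hx hz (by linarith [ht.2]) ht.1 (by ring)
      _ = f x + t * (f z - f x) := by ring)
  linarith

/-- key estimate along the first block for the iterates: for every
`k ≥ 0`, with `x̄^k` the projection of the iterate `x^k` onto the optimal set `X`,
and for every `γ ∈ (0,1]`,
`H^k - H* ≤ (L₁/β₁) γ ‖x^k - x̄^k‖² + (1/γ)[ H(x₁^k,x₂^k) - H(x₁^k + γ(x̄₁^k - x₁^k), x₂^k) ]`. -/
theorem stmt8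
    {B₁ B₂ : Type*}
    [NormedAddCommGroup B₁] [NormedSpace ℝ B₁] [CompleteSpace B₁]
    [NormedAddCommGroup B₂] [NormedSpace ℝ B₂] [CompleteSpace B₂]
    (f : B₁ × B₂ → ℝ) (Df : B₁ × B₂ → (B₁ × B₂) →L[ℝ] ℝ)
    (g₁ : B₁ → ℝ) (g₂ : B₂ → ℝ) (S₁ : Set B₁) (S₂ : Set B₂)
    -- (P3): g₁, g₂ proper convex, subdifferentiable on their domains
    (hS₁c : Convex ℝ S₁) (hS₂c : Convex ℝ S₂)
    (hS₁ne : S₁.Nonempty) (hS₂ne : S₂.Nonempty)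
    (hg₁conv : ConvexOn ℝ S₁ g₁) (hg₂conv : ConvexOn ℝ S₂ g₂)
    (hg₁sub : ∀ x₁ ∈ S₁, ∃ d : B₁ →L[ℝ] ℝ, ∀ y₁ ∈ S₁, g₁ x₁ + d (y₁ - x₁) ≤ g₁ y₁)
    (hg₂sub : ∀ x₂ ∈ S₂, ∃ d : B₂ →L[ℝ] ℝ, ∀ y₂ ∈ S₂, g₂ x₂ + d (y₂ - x₂) ≤ g₂ y₂)
    -- (P4): f convex and Fréchet differentiable on dom g₁ × dom g₂, with derivative Df
    (hfconv : ConvexOn ℝ (S₁ ×ˢ S₂) f)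
    (hfdiff : ∀ x ∈ S₁ ×ˢ S₂, HasFDerivWithinAt f (Df x) (S₁ ×ˢ S₂) x)
    -- (P2): a norm `N` on the product space and the constants β₁, β₂
    (N : B₁ × B₂ → ℝ) (β₁ : ℝ) (hβ₁ : 0 < β₁)
    (hNnonneg : ∀ z : B₁ × B₂, 0 ≤ N z)
    (hN₁ : ∀ z : B₁ × B₂, β₁ * ‖z.1‖ ^ 2 ≤ N z ^ 2)
    -- (P5): Lipschitz continuity of the first partial derivative, with finite L₁ > 0
    (L₁ : ℝ) (hL₁pos : 0 < L₁)
    (hlip₁ : ∀ x₁ ∈ S₁, ∀ x₂ ∈ S₂, ∀ h₁ : B₁, x₁ + h₁ ∈ S₁ →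
      ‖(Df (x₁ + h₁, x₂)).comp (ContinuousLinearMap.inl ℝ B₁ B₂) -
        (Df (x₁, x₂)).comp (ContinuousLinearMap.inl ℝ B₁ B₂)‖ ≤ L₁ * ‖h₁‖)
    -- (P6): nonempty optimal set X with optimal value H*
    (X : Set (B₁ × B₂))
    (hX : X = {y ∈ S₁ ×ˢ S₂ | ∀ z ∈ S₁ ×ˢ S₂, objFun f g₁ g₂ y ≤ objFun f g₁ g₂ z})
    (hXne : X.Nonempty)
    (Hstar : ℝ) (hHstar : ∀ y ∈ X, objFun f g₁ g₂ y = Hstar)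
    -- projections onto X with respect to N
    (proj : B₁ × B₂ → B₁ × B₂)
    (hproj : ∀ z ∈ S₁ ×ˢ S₂, proj z ∈ X ∧ ∀ y ∈ X, N (z - proj z) ≤ N (z - y))
    -- the alternating minimization sequence
    (x : ℕ → B₁ × B₂)
    (hx0 : x 0 ∈ S₁ ×ˢ S₂)
    (hinit : ∀ y₂ ∈ S₂, objFun f g₁ g₂ (x 0) ≤ objFun f g₁ g₂ ((x 0).1, y₂))
    (hstep1 : ∀ k : ℕ, (x (k + 1)).1 ∈ S₁ ∧ ∀ y₁ ∈ S₁,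
      objFun f g₁ g₂ ((x (k + 1)).1, (x k).2) ≤ objFun f g₁ g₂ (y₁, (x k).2))
    (hstep2 : ∀ k : ℕ, (x (k + 1)).2 ∈ S₂ ∧ ∀ y₂ ∈ S₂,
      objFun f g₁ g₂ (x (k + 1)) ≤ objFun f g₁ g₂ ((x (k + 1)).1, y₂)) :
    ∀ k : ℕ,
      ∀ γ : ℝ, 0 < γ → γ ≤ 1 →
      objFun f g₁ g₂ (x k) - Hstar ≤
        L₁ / β₁ * γ * N (x k - proj (x k)) ^ 2 +
          1 / γ * (objFun f g₁ g₂ (x k) -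
            objFun f g₁ g₂ ((x k).1 + γ • ((proj (x k)).1 - (x k).1), (x k).2)) := by

  -- all iterates remain in the feasible set
  have hmem : ∀ k, x k ∈ S₁ ×ˢ S₂ := by
    intro k
    cases k with
    | zero => exact hx0
    | succ n => exact Set.mem_prod.2 ⟨(hstep1 n).1, (hstep2 n).1⟩
  -- the second block is always optimal at the iterates
  have hblock2 : ∀ k, ∀ y₂ ∈ S₂, objFun f g₁ g₂ (x k) ≤ objFun f g₁ g₂ ((x k).1, y₂) := by
    intro k
    cases k with
    | zero => exact hinit
    | succ n => exact (hstep2 n).2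
  intro k γ hγ0 hγ1
  have hxkS : x k ∈ S₁ ×ˢ S₂ := hmem k
  have hx1 : (x k).1 ∈ S₁ := hxkS.1
  have hx2 : (x k).2 ∈ S₂ := hxkS.2
  obtain ⟨hpX, -⟩ := hproj (x k) hxkS
  set p := proj (x k) with hpdef
  have hpS : p ∈ S₁ ×ˢ S₂ := by rw [hX] at hpX; exact hpX.1
  have hp1 : p.1 ∈ S₁ := hpS.1
  have Hstar_eq : objFun f g₁ g₂ p = Hstar := hHstar p hpX
  set d₁ : B₁ := p.1 - (x k).1 with hd₁def
  have hD : HasFDerivWithinAt f (Df (x k)) (S₁ ×ˢ S₂) (x k) := hfdiff (x k) hxkS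
  -- gradient inequality
  have hgrad : f (x k) + Df (x k) (p - x k) ≤ f p := grad_ineq hfconv hxkS hpS hD
  -- splitting of the increment
  have hsplit : Df (x k) (p - x k)
      = Df (x k) (d₁, (0:B₂)) + Df (x k) ((0:B₁), p.2 - (x k).2) := by
    rw [← map_add]
    congr 1
    ext <;> simp [hd₁def]
  set A : ℝ := Df (x k) (d₁, (0:B₂)) with hAdef
  -- block-2 first-order optimality
  have hB : g₂ (x k).2 - g₂ p.2 ≤ Df (x k) ((0:B₁), p.2 - (x k).2) := by
    set v₂ : B₁ × B₂ := ((0:B₁), p.2 - (x k).2) with hv₂def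
    have hpt : ∀ t : ℝ, t ∈ Icc (0:ℝ) 1 →
        x k + t • v₂ = ((x k).1, (x k).2 + t • (p.2 - (x k).2)) := by
      intro t _
      ext <;> simp [hv₂def]
    have hz : ∀ t : ℝ, t ∈ Icc (0:ℝ) 1 → (x k).2 + t • (p.2 - (x k).2) ∈ S₂ := by
      intro t ht
      have : (x k).2 + t • (p.2 - (x k).2) = (1 - t) • (x k).2 + t • p.2 := by
        rw [smul_sub, sub_smul, one_smul]; abel
      rw [this]
      exact hS₂c hx2 hpS.2 (by linarith [ht.2]) ht.1 (by ring)
    have hmem2 : ∀ t : ℝ, t ∈ Icc (0:ℝ) 1 → x k + t • v₂ ∈ S₁ ×ˢ S₂ := by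
      intro t ht
      rw [hpt t ht]
      exact Set.mem_prod.2 ⟨hx1, hz t ht⟩
    refine dirDeriv_ge hD hmem2 ?_
    intro t ht
    rw [hpt t ht]
    have hopt := hblock2 k ((x k).2 + t • (p.2 - (x k).2)) (hz t ht)
    have hcvx : g₂ ((x k).2 + t • (p.2 - (x k).2))
        ≤ (1 - t) * g₂ (x k).2 + t * g₂ p.2 := by
      have : (x k).2 + t • (p.2 - (x k).2) = (1 - t) • (x k).2 + t • p.2 := by
        rw [smul_sub, sub_smul, one_smul]; abel
      rw [this]
      exact hg₂conv.2 hx2 hpS.2 (by linarith [ht.2]) ht.1 (by ring)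
    simp only [objFun] at hopt
    have hfx : f ((x k).1, (x k).2) = f (x k) := by rw [Prod.mk.eta]
    rw [hfx] at hopt
    nlinarith
  -- segment in the first block stays feasible
  have hseg : ∀ s : ℝ, 0 ≤ s → s ≤ 1 → (x k).1 + s • d₁ ∈ S₁ := by
    intro s hs0 hs1
    have : (x k).1 + s • d₁ = (1 - s) • (x k).1 + s • p.1 := by
      rw [hd₁def, smul_sub, sub_smul, one_smul]; abel
    rw [this]
    exact hS₁c hx1 hp1 (by linarith) hs0 (by ring)
  -- descent estimate along the first block
  set h₁ : B₁ := γ • d₁ with hh₁def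
  have hh₁seg : ∀ t : ℝ, t ∈ Icc (0:ℝ) 1 → (x k).1 + t • h₁ ∈ S₁ := by
    intro t ht
    rw [hh₁def, smul_smul]
    exact hseg (t * γ) (mul_nonneg ht.1 hγ0.le)
      (by nlinarith [ht.1, ht.2])
  have hdescent : f ((x k).1 + h₁, (x k).2)
      ≤ f (x k) + Df (x k) (h₁, (0:B₂)) + L₁ * ‖h₁‖ ^ 2 := by
    set g : ℝ → ℝ := fun t => f ((x k).1 + t • h₁, (x k).2) - t * Df (x k) (h₁, (0:B₂))
      with hgdef
    set g' : ℝ → ℝ := fun t =>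
      Df ((x k).1 + t • h₁, (x k).2) (h₁, (0:B₂)) - Df (x k) (h₁, (0:B₂)) with hg'def
    have hg : ∀ t ∈ Icc (0:ℝ) 1, HasDerivWithinAt g (g' t) (Icc (0:ℝ) 1) t := by
      intro t ht
      have h1 : HasDerivWithinAt (fun t : ℝ => (x k).1 + t • h₁) h₁ (Icc (0:ℝ) 1) t := by
        simpa using (((hasDerivAt_id t).smul_const h₁).const_add ((x k).1)).hasDerivWithinAt
      have h2 : HasDerivWithinAt (fun _ : ℝ => (x k).2) (0:B₂) (Icc (0:ℝ) 1) t :=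
        (hasDerivWithinAt_const _ _ _)
      have hpath := h1.prodMk h2
      have hmemt : ((x k).1 + t • h₁, (x k).2) ∈ S₁ ×ˢ S₂ :=
        Set.mem_prod.2 ⟨hh₁seg t ht, hx2⟩
      have hfd : HasFDerivWithinAt f (Df ((x k).1 + t • h₁, (x k).2)) (S₁ ×ˢ S₂)
          ((fun t : ℝ => ((x k).1 + t • h₁, (x k).2)) t) := hfdiff _ hmemt
      have hmapsTo : Set.MapsTo (fun t : ℝ => ((x k).1 + t • h₁, (x k).2))
          (Icc (0:ℝ) 1) (S₁ ×ˢ S₂) := fun s hs => Set.mem_prod.2 ⟨hh₁seg s hs, hx2⟩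
      have hcomp := hfd.comp_hasDerivWithinAt t hpath hmapsTo
      have := hcomp.sub ((hasDerivAt_mul_const (Df (x k) (h₁, (0:B₂)))).hasDerivWithinAt)
      exact this
    have hbound : ∀ t ∈ Icc (0:ℝ) 1, ‖g' t‖ ≤ L₁ * ‖h₁‖ ^ 2 := by
      intro t ht
      have hlip := hlip₁ (x k).1 hx1 (x k).2 hx2 (t • h₁) (hh₁seg t ht)
      have happ : g' t = ((Df ((x k).1 + t • h₁, (x k).2)).comp
            (ContinuousLinearMap.inl ℝ B₁ B₂) -
          (Df ((x k).1, (x k).2)).comp (ContinuousLinearMap.inl ℝ B₁ B₂)) h₁ := by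
        simp [hg'def, Prod.mk.eta]
      rw [happ]
      calc ‖(((Df ((x k).1 + t • h₁, (x k).2)).comp (ContinuousLinearMap.inl ℝ B₁ B₂) -
              (Df ((x k).1, (x k).2)).comp (ContinuousLinearMap.inl ℝ B₁ B₂))) h₁‖
          ≤ ‖((Df ((x k).1 + t • h₁, (x k).2)).comp (ContinuousLinearMap.inl ℝ B₁ B₂) -
              (Df ((x k).1, (x k).2)).comp (ContinuousLinearMap.inl ℝ B₁ B₂))‖ * ‖h₁‖ :=
            ContinuousLinearMap.le_opNorm _ _
        _ ≤ (L₁ * ‖t • h₁‖) * ‖h₁‖ :=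
            mul_le_mul_of_nonneg_right hlip (norm_nonneg _)
        _ ≤ L₁ * ‖h₁‖ ^ 2 := by
            rw [norm_smul, Real.norm_eq_abs, abs_of_nonneg ht.1]
            nlinarith [norm_nonneg h₁, ht.1, ht.2, hL₁pos,
              mul_nonneg (mul_nonneg hL₁pos.le (sub_nonneg.2 ht.2)) (sq_nonneg ‖h₁‖)]
    have hmv := Convex.norm_image_sub_le_of_norm_hasDerivWithin_le hg hbound
      (convex_Icc (0:ℝ) 1) (Set.left_mem_Icc.2 zero_le_one) (Set.right_mem_Icc.2 zero_le_one)
    have hg1 : g 1 = f ((x k).1 + h₁, (x k).2) - Df (x k) (h₁, (0:B₂)) := by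
      simp [hgdef]
    have hg0 : g 0 = f (x k) := by simp [hgdef, Prod.mk.eta]
    rw [hg1, hg0] at hmv
    have := (abs_le.1 (by simpa using hmv)).2
    linarith
  -- convexity of g₁ along the segment
  have hg1γ : g₁ ((x k).1 + h₁) ≤ g₁ (x k).1 + γ * (g₁ p.1 - g₁ (x k).1) := by
    have heq : (x k).1 + h₁ = (1 - γ) • (x k).1 + γ • p.1 := by
      rw [hh₁def, hd₁def, smul_sub, sub_smul, one_smul]; abel
    rw [heq]
    have h := hg₁conv.2 hx1 hp1 (sub_nonneg.2 hγ1) hγ0.le (by ring)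
    simp only [smul_eq_mul] at h
    linarith
  -- comparing norms through N
  have hNb : L₁ * ‖d₁‖ ^ 2 ≤ L₁ / β₁ * N (x k - p) ^ 2 := by
    have h1 := hN₁ (x k - p)
    have h2 : (x k - p).1 = -d₁ := by simp [hd₁def]
    rw [h2, norm_neg] at h1
    have h3 : L₁ / β₁ * (β₁ * ‖d₁‖ ^ 2) ≤ L₁ / β₁ * N (x k - p) ^ 2 :=
      mul_le_mul_of_nonneg_left h1 (by positivity)
    have hβne : β₁ ≠ 0 := ne_of_gt hβ₁
    have h4 : L₁ / β₁ * (β₁ * ‖d₁‖ ^ 2) = L₁ * ‖d₁‖ ^ 2 := by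
      field_simp
    linarith
  -- linearity facts
  have hlinA : Df (x k) (h₁, (0:B₂)) = γ * A := by
    have : ((h₁, (0:B₂)) : B₁ × B₂) = γ • ((d₁, (0:B₂)) : B₁ × B₂) := by
      ext <;> simp [hh₁def]
    rw [this, map_smul, hAdef]
    rfl
  have hnh₁ : ‖h₁‖ ^ 2 = γ ^ 2 * ‖d₁‖ ^ 2 := by
    rw [hh₁def, norm_smul, Real.norm_eq_abs, abs_of_nonneg hγ0.le]
    ring
  -- assemble everything
  simp only [objFun] at Hstar_eq ⊢
  have hfxk : f ((x k).1, (x k).2) = f (x k) := by rw [Prod.mk.eta]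
  have hfγ : ((x k).1 + γ • (p.1 - (x k).1), (x k).2)
      = (((x k).1 + h₁, (x k).2) : B₁ × B₂) := by
    rw [hh₁def, hd₁def]
  rw [hfγ, hfxk]
  -- key inequality (1): H^k - H* ≤ R, with R := -A + g₁ x₁ - g₁ p₁
  have key1 : f (x k) + g₁ (x k).1 + g₂ (x k).2 - Hstar
      ≤ -A + g₁ (x k).1 - g₁ p.1 := by
    rw [← Hstar_eq]
    rw [hsplit] at hgrad
    linarith
  -- key inequality (2): from the descent lemma
  have key2 : f ((x k).1 + h₁, (x k).2) + g₁ ((x k).1 + h₁) + g₂ (x k).2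
      ≤ f (x k) + g₁ (x k).1 + g₂ (x k).2
        + γ * (A + g₁ p.1 - g₁ (x k).1) + L₁ * γ ^ 2 * ‖d₁‖ ^ 2 := by
    rw [hlinA, hnh₁] at hdescent
    linarith
  have hdiv : 1 / γ * (f (x k) + g₁ (x k).1 + g₂ (x k).2
        - (f ((x k).1 + h₁, (x k).2) + g₁ ((x k).1 + h₁) + g₂ (x k).2))
      ≥ (-A + g₁ (x k).1 - g₁ p.1) - L₁ * γ * ‖d₁‖ ^ 2 := by
    have hstep : f (x k) + g₁ (x k).1 + g₂ (x k).2
        - (f ((x k).1 + h₁, (x k).2) + g₁ ((x k).1 + h₁) + g₂ (x k).2)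
        ≥ γ * (((-A + g₁ (x k).1 - g₁ p.1) - L₁ * γ * ‖d₁‖ ^ 2)) := by
      have hring : γ * (((-A + g₁ (x k).1 - g₁ p.1) - L₁ * γ * ‖d₁‖ ^ 2))
          = -(γ * (A + g₁ p.1 - g₁ (x k).1)) - L₁ * γ ^ 2 * ‖d₁‖ ^ 2 := by ring
      rw [hring]
      linarith [key2]
    have hpos : (0:ℝ) < 1 / γ := by positivity
    have := mul_le_mul_of_nonneg_left hstep (le_of_lt hpos)
    have hγne : γ ≠ 0 := ne_of_gt hγ0
    have hcalc : 1 / γ * (γ * (((-A + g₁ (x k).1 - g₁ p.1) - L₁ * γ * ‖d₁‖ ^ 2)))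
        = (-A + g₁ (x k).1 - g₁ p.1) - L₁ * γ * ‖d₁‖ ^ 2 := by
      field_simp
    rw [hcalc] at this
    linarith [this]
  have hNγ : L₁ * γ * ‖d₁‖ ^ 2 ≤ L₁ / β₁ * γ * N (x k - p) ^ 2 := by
    have h := mul_le_mul_of_nonneg_left hNb hγ0.le
    have e1 : γ * (L₁ * ‖d₁‖ ^ 2) = L₁ * γ * ‖d₁‖ ^ 2 := by ring
    have e2 : γ * (L₁ / β₁ * N (x k - p) ^ 2) = L₁ / β₁ * γ * N (x k - p) ^ 2 := by ring
    linarith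
  linarith [key1, hdiv, hNγ]
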